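/- For fixed reals a ≥ 0, b ≥ 0 and m, n with n > -1, m+n+1 > 0, the truncated-series approximation S_p = ∑_{l=0}^p a^{2l} e^{-a²/2} Γ(p+l) p^{1-2l} Γ((m+n+2l+1)/2, b²/2) / (l! Γ(n+l+1) 2^{(n-m+2l+1)/2} Γ(p-l+1)) converges, as p → ∞, to the exact series ∑_{l=0}^∞ a^{2l} e^{-a²/2} Γ((m+n+2l+1)/2, b²/2) / (l! Γ(n+l+1) 2^{(n-m+2l+1)/2}); in particular, for each fixed l, the coefficient Γ(p+l) p^{1-2l} / Γ(p-l+1) tends to 1 as p → ∞. -/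

import Mathlib

open MeasureTheory Real Filter

noncomputable def uGamma (a x : ℝ) : ℝ := ∫ t in Set.Ioi x, t ^ (a - 1) * Real.exp (-t)

noncomputable def lGamma (a x : ℝ) : ℝ := ∫ t in Set.Ioc 0 x, t ^ (a - 1) * Real.exp (-t)

noncomputable def poch (x : ℝ) (l : ℕ) : ℝ := ∏ i ∈ Finset.range l, (x + i)

noncomputable def besselI (n x : ℝ) : ℝ :=
  ∑' l : ℕ, (x / 2) ^ (n + 2 * (l : ℝ)) / ((l.factorial : ℝ) * Real.Gamma (n + (l : ℝ) + 1))

noncomputable def oneF₁ (α β x : ℝ) : ℝ :=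
  ∑' i : ℕ, (poch α i / poch β i) * x ^ i / (i.factorial : ℝ)

noncomputable def nuttallQ (m n a b : ℝ) : ℝ :=
  ∫ x in Set.Ioi b, x ^ m * Real.exp (-(x ^ 2 + a ^ 2) / 2) * besselI n (a * x)

noncomputable def nQ (m n a b : ℝ) : ℝ := a ^ (-n) * nuttallQ m n a b

noncomputable def marcumQ (ν a b : ℝ) : ℝ :=
  a ^ (1 - ν) * ∫ x in Set.Ioi b, x ^ ν * Real.exp (-(x ^ 2 + a ^ 2) / 2) * besselI (ν - 1) (a * x)

noncomputable def toronto (B m n r : ℝ) : ℝ :=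
  2 * r ^ (n - m + 1) * Real.exp (-r ^ 2) *
    ∫ t in Set.Ioo 0 B, t ^ (m - n) * Real.exp (-t ^ 2) * besselI n (2 * r * t)

private lemma fact_prod (m k : ℕ) :
    (((m + k).factorial : ℝ)) = (m.factorial : ℝ) * ∏ i ∈ Finset.range k, ((m : ℝ) + 1 + i) := by
  induction k with
  | zero => simp
  | succ k ih =>
    rw [Finset.prod_range_succ, ← mul_assoc, ← ih, show m + (k+1) = (m+k) + 1 from rfl,
      Nat.factorial_succ]
    push_cast
    ring

private lemma tendsto_add_div_add (c d : ℝ) :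
    Tendsto (fun p : ℕ => ((p : ℝ) + c) / ((p : ℝ) + d)) atTop (nhds 1) := by
  have h1 : Tendsto (fun p : ℕ => (p : ℝ) + d) atTop atTop :=
    tendsto_atTop_add_const_right _ d tendsto_natCast_atTop_atTop
  have h2 : Tendsto (fun p : ℕ => 1 + (c - d) / ((p : ℝ) + d)) atTop (nhds 1) := by
    simpa using tendsto_const_nhds.add
      ((tendsto_const_nhds (x := c - d)).div_atTop h1)
  refine h2.congr' ?_
  filter_upwards [h1.eventually_gt_atTop 0] with p hp
  field_simp
  ring

private lemma uGamma_nonneg' (s x : ℝ) (hx : 0 ≤ x) : 0 ≤ uGamma s x := by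
  apply MeasureTheory.setIntegral_nonneg measurableSet_Ioi
  intro t ht
  exact mul_nonneg (Real.rpow_nonneg (hx.trans ht.le) _) (Real.exp_pos _).le

private lemma uGamma_le_Gamma' (s x : ℝ) (hs : 0 < s) (hx : 0 ≤ x) : uGamma s x ≤ Real.Gamma s := by
  have hint : IntegrableOn (fun t : ℝ => t ^ (s - 1) * Real.exp (-t)) (Set.Ioi 0) := by
    refine (Real.GammaIntegral_convergent hs).congr_fun (fun t ht => by ring) measurableSet_Ioi
  have h2 : (∫ t in Set.Ioi x, t ^ (s - 1) * Real.exp (-t)) ≤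
      ∫ t in Set.Ioi 0, t ^ (s - 1) * Real.exp (-t) := by
    refine MeasureTheory.setIntegral_mono_set hint ?_ ?_
    · filter_upwards [MeasureTheory.ae_restrict_mem measurableSet_Ioi] with t ht
      exact mul_nonneg (Real.rpow_nonneg ht.le _) (Real.exp_pos _).le
    · exact HasSubset.Subset.eventuallyLE (Set.Ioi_subset_Ioi hx)
  refine h2.trans ?_
  rw [Real.Gamma_eq_integral hs]
  exact le_of_eq (MeasureTheory.setIntegral_congr_fun measurableSet_Ioi fun t ht => by ring)

private lemma ratio_eq (l p : ℕ) (hlp : l ≤ p) (hp : 1 ≤ p) :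
    Real.Gamma ((p : ℝ) + (l : ℝ)) * (p : ℝ) ^ (1 - 2 * (l : ℝ)) /
      Real.Gamma ((p : ℝ) - (l : ℝ) + 1) =
    (∏ i ∈ Finset.range (2 * l), (((p : ℝ) - (l : ℝ) + 1 + i) / p)) * ((p : ℝ) / ((p : ℝ) + l)) := by
  obtain ⟨q, rfl⟩ : ∃ q, p = q + l := ⟨p - l, (Nat.sub_add_cancel hlp).symm⟩
  have hq2l : 1 ≤ q + 2 * l := by omega
  obtain ⟨r, hr⟩ : ∃ r, q + 2 * l = r + 1 := ⟨q + 2 * l - 1, by omega⟩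
  have hp0 : (0 : ℝ) < ((q + l : ℕ) : ℝ) := by exact_mod_cast hp
  -- rewrite Gamma ((p:ℝ) + l) as factorial
  have h1 : ((q + l : ℕ) : ℝ) + (l : ℝ) = (r : ℝ) + 1 := by
    have : q + l + l = r + 1 := by omega
    exact_mod_cast congrArg (Nat.cast : ℕ → ℝ) this
  have h2 : ((q + l : ℕ) : ℝ) - (l : ℝ) + 1 = (q : ℝ) + 1 := by push_cast; ring
  rw [h1, h2, Real.Gamma_nat_eq_factorial, Real.Gamma_nat_eq_factorial]
  -- the power
  have hpow : ((q + l : ℕ) : ℝ) ^ (1 - 2 * (l : ℝ)) =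
      ((q + l : ℕ) : ℝ) / ((q + l : ℕ) : ℝ) ^ (2 * l) := by
    rw [show (1 : ℝ) - 2 * (l : ℝ) = 1 - ((2 * l : ℕ) : ℝ) by push_cast; ring,
      Real.rpow_sub hp0, Real.rpow_one, Real.rpow_natCast]
  rw [hpow]
  -- the product
  have hprod : (∏ i ∈ Finset.range (2 * l), (((q : ℝ) + 1 + i) / ((q + l : ℕ) : ℝ)))
      = ((q + 2 * l).factorial : ℝ) / ((q.factorial : ℝ) * ((q + l : ℕ) : ℝ) ^ (2 * l)) := by
    rw [Finset.prod_div_distrib, Finset.prod_const,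
      Finset.card_range, fact_prod q (2 * l)]
    have hfq : (q.factorial : ℝ) ≠ 0 := by exact_mod_cast q.factorial_ne_zero
    rw [mul_div_mul_left _ _ hfq]
  rw [hprod]
  have hfq : (q.factorial : ℝ) ≠ 0 := by exact_mod_cast q.factorial_ne_zero
  have hfr : (r.factorial : ℝ) ≠ 0 := by exact_mod_cast r.factorial_ne_zero
  have hpow0 : ((q + l : ℕ) : ℝ) ^ (2 * l) ≠ 0 := pow_ne_zero _ hp0.ne'
  have hpl : ((q + l : ℕ) : ℝ) + (l : ℝ) ≠ 0 := by rw [h1]; positivity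
  -- (q+2l)! = (q+2l) * r! = (r+1) * r!
  have hfact : ((q + 2 * l).factorial : ℝ) = ((r : ℝ) + 1) * (r.factorial : ℝ) := by
    rw [hr, Nat.factorial_succ]; push_cast; ring
  have hr1 : (r : ℝ) + 1 ≠ 0 := by positivity
  have hP0 : ((q : ℝ) + (l : ℝ)) ≠ 0 := by
    have := hp0.ne'
    push_cast at this ⊢
    exact this
  rw [hfact]
  field_simp


private lemma ratio_tendsto (l : ℕ) :
    Tendsto (fun p : ℕ => Real.Gamma ((p : ℝ) + (l : ℝ)) * (p : ℝ) ^ (1 - 2 * (l : ℝ)) /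
      Real.Gamma ((p : ℝ) - (l : ℝ) + 1)) atTop (nhds 1) := by
  have h1 : Tendsto (fun p : ℕ =>
      (∏ i ∈ Finset.range (2 * l), (((p : ℝ) - (l : ℝ) + 1 + i) / p)) * ((p : ℝ) / ((p : ℝ) + l)))
      atTop (nhds 1) := by
    have hA : Tendsto (fun p : ℕ => ∏ i ∈ Finset.range (2 * l), (((p : ℝ) - (l : ℝ) + 1 + i) / p))
        atTop (nhds (∏ _i ∈ Finset.range (2 * l), (1 : ℝ))) := by
      refine tendsto_finset_prod _ fun i _ => ?_
      exact (tendsto_add_div_add (-(l : ℝ) + 1 + i) 0).congr (fun p => by ring_nf)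
    have hB : Tendsto (fun p : ℕ => (p : ℝ) / ((p : ℝ) + l)) atTop (nhds 1) :=
      (tendsto_add_div_add 0 (l : ℝ)).congr (fun p => by ring_nf)
    simpa using hA.mul hB
  refine h1.congr' ?_
  filter_upwards [eventually_ge_atTop (max l 1)] with p hp
  exact (ratio_eq l p (le_trans (le_max_left _ _) hp) (le_trans (le_max_right _ _) hp)).symm


private lemma ratio_bound (l p : ℕ) (hlp : l ≤ p) (hp : 1 ≤ p) :
    0 ≤ Real.Gamma ((p : ℝ) + (l : ℝ)) * (p : ℝ) ^ (1 - 2 * (l : ℝ)) /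
      Real.Gamma ((p : ℝ) - (l : ℝ) + 1) ∧
    Real.Gamma ((p : ℝ) + (l : ℝ)) * (p : ℝ) ^ (1 - 2 * (l : ℝ)) /
      Real.Gamma ((p : ℝ) - (l : ℝ) + 1) ≤ 4 ^ l := by
  rw [ratio_eq l p hlp hp]
  have hp0 : (0 : ℝ) < (p : ℝ) := by exact_mod_cast hp
  have hlpR : (l : ℝ) ≤ (p : ℝ) := by exact_mod_cast hlp
  have hfac : ∀ i ∈ Finset.range (2 * l),
      (0 : ℝ) ≤ ((p : ℝ) - (l : ℝ) + 1 + i) / p ∧ ((p : ℝ) - (l : ℝ) + 1 + i) / p ≤ 2 := by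
    intro i hi
    have hi' : (i : ℝ) + 1 ≤ 2 * l := by
      have := Finset.mem_range.mp hi
      exact_mod_cast this
    constructor
    · apply div_nonneg _ hp0.le
      have : (0 : ℝ) ≤ (i : ℝ) := Nat.cast_nonneg i
      linarith
    · rw [div_le_iff₀ hp0]
      linarith
  have hprod_nonneg : (0 : ℝ) ≤ ∏ i ∈ Finset.range (2 * l), (((p : ℝ) - (l : ℝ) + 1 + i) / p) :=
    Finset.prod_nonneg fun i hi => (hfac i hi).1
  have hprod_le : (∏ i ∈ Finset.range (2 * l), (((p : ℝ) - (l : ℝ) + 1 + i) / p)) ≤ 4 ^ l := by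
    calc (∏ i ∈ Finset.range (2 * l), (((p : ℝ) - (l : ℝ) + 1 + i) / p))
        ≤ ∏ _i ∈ Finset.range (2 * l), (2 : ℝ) :=
          Finset.prod_le_prod (fun i hi => (hfac i hi).1) (fun i hi => (hfac i hi).2)
      _ = 4 ^ l := by
          rw [Finset.prod_const, Finset.card_range, pow_mul]
          norm_num
  have hB0 : (0 : ℝ) ≤ (p : ℝ) / ((p : ℝ) + l) := by positivity
  have hB1 : (p : ℝ) / ((p : ℝ) + l) ≤ 1 := by
    rw [div_le_one (by positivity)]
    simp
  constructor
  · exact mul_nonneg hprod_nonneg hB0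
  · calc (∏ i ∈ Finset.range (2 * l), (((p : ℝ) - (l : ℝ) + 1 + i) / p)) * ((p : ℝ) / ((p : ℝ) + l))
        ≤ (4 : ℝ) ^ l * 1 := mul_le_mul hprod_le hB1 hB0 (by positivity)
      _ = 4 ^ l := mul_one _


private noncomputable def cterm (m n a b : ℝ) (l : ℕ) : ℝ :=
  a ^ (2 * l) * Real.exp (-a ^ 2 / 2) * uGamma ((m + n + 2 * (l : ℝ) + 1) / 2) (b ^ 2 / 2) /
    ((l.factorial : ℝ) * Real.Gamma (n + (l : ℝ) + 1) * (2 : ℝ) ^ ((n - m + 2 * (l : ℝ) + 1) / 2))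

private noncomputable def pterm (m n a b : ℝ) (p l : ℕ) : ℝ :=
  a ^ (2 * l) * Real.exp (-a ^ 2 / 2) * Real.Gamma ((p : ℝ) + (l : ℝ)) *
    (p : ℝ) ^ (1 - 2 * (l : ℝ)) * uGamma ((m + n + 2 * (l : ℝ) + 1) / 2) (b ^ 2 / 2) /
    ((l.factorial : ℝ) * Real.Gamma (n + (l : ℝ) + 1) *
      (2 : ℝ) ^ ((n - m + 2 * (l : ℝ) + 1) / 2) * Real.Gamma ((p : ℝ) - (l : ℝ) + 1))

private noncomputable def gterm (m n a : ℝ) (l : ℕ) : ℝ :=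
  Real.exp (-a ^ 2 / 2) * (2 * a ^ 2) ^ l /
      ((l.factorial : ℝ) * Real.Gamma (n + (l : ℝ) + 1) * (2 : ℝ) ^ ((n - m + 1) / 2)) *
    Real.Gamma ((m + n + 1) / 2 + l)

private lemma Gn_pos {n : ℝ} (hn : -1 < n) (l : ℕ) : 0 < Real.Gamma (n + (l : ℝ) + 1) :=
  Real.Gamma_pos_of_pos (by have := Nat.cast_nonneg (α := ℝ) l; linarith)

private lemma Gs_pos {m n : ℝ} (hmn : 0 < m + n + 1) (l : ℕ) :
    0 < Real.Gamma ((m + n + 1) / 2 + l) :=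
  Real.Gamma_pos_of_pos (by have := Nat.cast_nonneg (α := ℝ) l; linarith)

private lemma cterm_nonneg {m n a b : ℝ} (hn : -1 < n) (hb : 0 ≤ b) (l : ℕ) :
    0 ≤ cterm m n a b l := by
  unfold cterm
  apply div_nonneg
  · have h1 := uGamma_nonneg' ((m + n + 2 * (l : ℝ) + 1) / 2) (b ^ 2 / 2) (by positivity)
    have h0 : (0 : ℝ) ≤ a ^ (2 * l) := by rw [pow_mul]; positivity
    exact mul_nonneg (mul_nonneg h0 (Real.exp_pos _).le) h1
  · have h2 := Gn_pos hn l
    positivity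

private lemma pterm_eq (m n a b : ℝ) (p l : ℕ) : pterm m n a b p l =
    cterm m n a b l * (Real.Gamma ((p : ℝ) + (l : ℝ)) * (p : ℝ) ^ (1 - 2 * (l : ℝ)) /
      Real.Gamma ((p : ℝ) - (l : ℝ) + 1)) := by
  unfold pterm cterm
  ring

private lemma csplit {m n a b : ℝ} (hn : -1 < n) (l : ℕ) : cterm m n a b l * 4 ^ l =
    Real.exp (-a ^ 2 / 2) * (2 * a ^ 2) ^ l /
        ((l.factorial : ℝ) * Real.Gamma (n + (l : ℝ) + 1) * (2 : ℝ) ^ ((n - m + 1) / 2)) *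
      uGamma ((m + n + 2 * (l : ℝ) + 1) / 2) (b ^ 2 / 2) := by
  unfold cterm
  rw [show (n - m + 2 * (l : ℝ) + 1) / 2 = (n - m + 1) / 2 + (l : ℕ) by push_cast; ring,
    Real.rpow_add two_pos, Real.rpow_natCast]
  rw [show (4 : ℝ) = 2 * 2 by norm_num]
  have hfl : (l.factorial : ℝ) ≠ 0 := by exact_mod_cast l.factorial_ne_zero
  have hG := (Gn_pos hn l).ne'
  have h2 : ((2 : ℝ) ^ ((n - m + 1) / 2)) ≠ 0 := (Real.rpow_pos_of_pos two_pos _).ne'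
  have h2l : ((2 : ℝ) ^ l) ≠ 0 := by positivity
  field_simp
  ring_nf
  rw [show (2:ℝ) ^ (l * 2) = 4 ^ l from by rw [mul_comm, pow_mul]; norm_num]

private lemma cbound {m n a b : ℝ} (hn : -1 < n) (hmn : 0 < m + n + 1) (hb : 0 ≤ b) (l : ℕ) :
    cterm m n a b l * 4 ^ l ≤ gterm m n a l := by
  rw [csplit hn]
  unfold gterm
  rw [show (m + n + 2 * (l : ℝ) + 1) / 2 = (m + n + 1) / 2 + l by push_cast; ring]
  refine mul_le_mul_of_nonneg_left
    (uGamma_le_Gamma' _ _ (by have := Nat.cast_nonneg (α := ℝ) l; linarith) (by positivity)) ?_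
  have hG := Gn_pos hn l
  have hfl : (0 : ℝ) < (l.factorial : ℝ) := by exact_mod_cast l.factorial_pos
  have h2 : (0 : ℝ) < (2 : ℝ) ^ ((n - m + 1) / 2) := Real.rpow_pos_of_pos two_pos _
  positivity

private lemma gterm_nonneg {m n a : ℝ} (hn : -1 < n) (hmn : 0 < m + n + 1) (l : ℕ) :
    0 ≤ gterm m n a l := by
  unfold gterm
  have hG := Gn_pos hn l
  have hGs := Gs_pos hmn l
  have hfl : (0 : ℝ) < (l.factorial : ℝ) := by exact_mod_cast l.factorial_pos
  have h2 : (0 : ℝ) < (2 : ℝ) ^ ((n - m + 1) / 2) := Real.rpow_pos_of_pos two_pos _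
  positivity

private lemma gterm_rec {m n a : ℝ} (hn : -1 < n) (hmn : 0 < m + n + 1) (l : ℕ) :
    gterm m n a (l + 1) =
    gterm m n a l * (2 * a ^ 2 * ((m + n + 1) / 2 + l) / (((l : ℝ) + 1) * (n + (l : ℝ) + 1))) := by
  have hl0 : (0 : ℝ) ≤ (l : ℝ) := Nat.cast_nonneg l
  unfold gterm
  have h1 : ((l + 1 : ℕ) : ℝ) = (l : ℝ) + 1 := by push_cast; ring
  have h2 : Real.Gamma ((m + n + 1) / 2 + ((l : ℝ) + 1)) =
      ((m + n + 1) / 2 + l) * Real.Gamma ((m + n + 1) / 2 + l) := by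
    rw [show (m + n + 1) / 2 + ((l : ℝ) + 1) = ((m + n + 1) / 2 + l) + 1 by ring,
      Real.Gamma_add_one (by positivity : (0:ℝ) < (m + n + 1) / 2 + l).ne']
  have h3 : Real.Gamma (n + ((l : ℝ) + 1) + 1) =
      (n + (l : ℝ) + 1) * Real.Gamma (n + (l : ℝ) + 1) := by
    rw [show n + ((l : ℝ) + 1) + 1 = (n + (l : ℝ) + 1) + 1 by ring,
      Real.Gamma_add_one (by linarith : (0:ℝ) < n + (l : ℝ) + 1).ne']
  rw [h1, h2, h3, Nat.factorial_succ]
  have hfl : (l.factorial : ℝ) ≠ 0 := by exact_mod_cast l.factorial_ne_zero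
  have hG := (Gn_pos hn l).ne'
  have hGs := (Gs_pos hmn l).ne'
  have h2p : ((2 : ℝ) ^ ((n - m + 1) / 2)) ≠ 0 := (Real.rpow_pos_of_pos two_pos _).ne'
  have hl1 : ((l : ℝ) + 1) ≠ 0 := by positivity
  have hnl : (n + (l : ℝ) + 1) ≠ 0 := ne_of_gt (by linarith : (0:ℝ) < n + (l : ℝ) + 1)
  field_simp
  push_cast
  ring

private lemma gterm_summable {m n a : ℝ} (hn : -1 < n) (hmn : 0 < m + n + 1) :
    Summable (gterm m n a) := by
  have hto : Tendsto (fun l : ℕ =>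
      2 * a ^ 2 * ((m + n + 1) / 2 + l) / (((l : ℝ) + 1) * (n + (l : ℝ) + 1))) atTop (nhds 0) := by
    have t1 : Tendsto (fun l : ℕ => ((l : ℝ) + (m + n + 1) / 2) / ((l : ℝ) + 1)) atTop (nhds 1) :=
      tendsto_add_div_add _ _
    have t2 : Tendsto (fun l : ℕ => ((l : ℝ) + (n + 1))⁻¹) atTop (nhds 0) :=
      tendsto_inv_atTop_zero.comp (tendsto_atTop_add_const_right _ (n + 1) tendsto_natCast_atTop_atTop)
    have := ((tendsto_const_nhds (x := 2 * a ^ 2) (f := atTop (α := ℕ))).mul t1).mul t2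
    simp only [mul_one, mul_zero] at this
    refine this.congr fun l => ?_
    have h1 : ((l : ℝ) + 1) ≠ 0 := by positivity
    have h2 : (n + (l : ℝ) + 1) ≠ 0 :=
      ne_of_gt (by have := Nat.cast_nonneg (α := ℝ) l; linarith)
    have h2' : ((l : ℝ) + (n + 1)) ≠ 0 := by
      rw [show (l : ℝ) + (n + 1) = n + (l : ℝ) + 1 by ring]; exact h2
    field_simp
    ring
  have hev : ∀ᶠ l : ℕ in atTop,
      2 * a ^ 2 * ((m + n + 1) / 2 + l) / (((l : ℝ) + 1) * (n + (l : ℝ) + 1)) < 1 / 2 :=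
    hto.eventually_lt_const (by norm_num)
  apply summable_of_ratio_norm_eventually_le (r := 1 / 2) (by norm_num)
  filter_upwards [hev] with l hl
  rw [Real.norm_eq_abs, Real.norm_eq_abs, abs_of_nonneg (gterm_nonneg hn hmn _),
    abs_of_nonneg (gterm_nonneg hn hmn _), gterm_rec hn hmn]
  calc gterm m n a l * (2 * a ^ 2 * ((m + n + 1) / 2 + l) / (((l : ℝ) + 1) * (n + (l : ℝ) + 1)))
      ≤ gterm m n a l * (1 / 2) :=
        mul_le_mul_of_nonneg_left hl.le (gterm_nonneg hn hmn l)
    _ = 1 / 2 * gterm m n a l := by ring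

theorem stmt19 (m n a b : ℝ) (hn : -1 < n) (hmn : 0 < m + n + 1) (ha : 0 ≤ a) (hb : 0 ≤ b) :
    Filter.Tendsto (fun p : ℕ =>
        ∑ l ∈ Finset.range (p + 1),
          a ^ (2 * l) * Real.exp (-a ^ 2 / 2) * Real.Gamma ((p : ℝ) + (l : ℝ)) *
            (p : ℝ) ^ (1 - 2 * (l : ℝ)) * uGamma ((m + n + 2 * (l : ℝ) + 1) / 2) (b ^ 2 / 2) /
            ((l.factorial : ℝ) * Real.Gamma (n + (l : ℝ) + 1) *
              (2 : ℝ) ^ ((n - m + 2 * (l : ℝ) + 1) / 2) * Real.Gamma ((p : ℝ) - (l : ℝ) + 1)))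
      Filter.atTop
      (nhds (∑' l : ℕ,
        a ^ (2 * l) * Real.exp (-a ^ 2 / 2) * uGamma ((m + n + 2 * (l : ℝ) + 1) / 2) (b ^ 2 / 2) /
          ((l.factorial : ℝ) * Real.Gamma (n + (l : ℝ) + 1) *
            (2 : ℝ) ^ ((n - m + 2 * (l : ℝ) + 1) / 2)))) ∧
    ∀ l : ℕ, Filter.Tendsto (fun p : ℕ =>
        Real.Gamma ((p : ℝ) + (l : ℝ)) * (p : ℝ) ^ (1 - 2 * (l : ℝ)) /
          Real.Gamma ((p : ℝ) - (l : ℝ) + 1))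
      Filter.atTop (nhds 1) := by
  refine ⟨?_, ratio_tendsto⟩
  have hsummable : Summable (fun l : ℕ => cterm m n a b l * 4 ^ l) :=
    (gterm_summable hn hmn).of_nonneg_of_le
      (fun l => mul_nonneg (cterm_nonneg hn hb l) (by positivity))
      (fun l => cbound hn hmn hb l)
  have key : Tendsto (fun p : ℕ => ∑' l : ℕ, (if l ≤ p then pterm m n a b p l else 0)) atTop
      (nhds (∑' l : ℕ, cterm m n a b l)) := by
    apply tendsto_tsum_of_dominated_convergence hsummable
    · intro l
      have h1 := (ratio_tendsto l).const_mul (cterm m n a b l)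
      rw [mul_one] at h1
      refine h1.congr' ?_
      filter_upwards [eventually_ge_atTop l] with p hp
      rw [if_pos hp, pterm_eq]
    · filter_upwards [eventually_ge_atTop 1] with p hp l
      by_cases hl : l ≤ p
      · rw [if_pos hl, pterm_eq, Real.norm_eq_abs]
        obtain ⟨hge, hle⟩ := ratio_bound l p hl hp
        rw [abs_of_nonneg (mul_nonneg (cterm_nonneg hn hb l) hge)]
        exact mul_le_mul_of_nonneg_left hle (cterm_nonneg hn hb l)
      · rw [if_neg hl]
        simpa using mul_nonneg (cterm_nonneg hn hb l) (by positivity : (0:ℝ) ≤ 4 ^ l)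
  have hsum_eq : ∀ p : ℕ, (∑' l : ℕ, (if l ≤ p then pterm m n a b p l else 0)) =
      ∑ l ∈ Finset.range (p + 1), pterm m n a b p l := by
    intro p
    rw [tsum_eq_sum (s := Finset.range (p + 1)) (fun l hl => if_neg (by
      simp only [Finset.mem_range] at hl; omega))]
    exact Finset.sum_congr rfl fun l hl => if_pos (by
      simp only [Finset.mem_range] at hl; omega)
  have final := key.congr hsum_eq
  exact final
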